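/- Let H > 0, γ_s > 0, and real numbers x_l, y_l, δ, ξ. Define d² = H² + x_l² + y_l², x' = x_l + δ, y' = y_l + ξ. Then log(1 + γ_s/(H² + x'² + y'²)) ≥ log(1 + γ_s/d²) - γ_s·(δ² + ξ² + 2x_l·δ + 2y_l·ξ) / ((d² + γ_s)·d²). -/
import Mathlib

lemma aux_log_bound (a b γ : ℝ) (ha : 0 < a) (hb : 0 < b) (hγ : 0 < γ) :
    Real.log (1 + γ / a) ≥ Real.log (1 + γ / b) - γ * (a - b) / ((b + γ) * b) := by
  have haγ : 0 < a + γ := by linarith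
  have hbγ : 0 < b + γ := by linarith
  have e1 : 1 + γ / a = (a + γ) / a := by field_simp
  have e2 : 1 + γ / b = (b + γ) / b := by field_simp
  rw [e1, e2, Real.log_div (by positivity) (by positivity),
      Real.log_div (by positivity) (by positivity)]
  -- log x ≥ 1 - 1/x with x = (a+γ)*b/((b+γ)*a)
  set x : ℝ := (a + γ) * b / ((b + γ) * a) with hx
  have hxpos : 0 < x := by positivity
  have hlogx : Real.log x ≥ 1 - 1 / x := by
    have h := Real.log_le_sub_one_of_pos (show (0:ℝ) < x⁻¹ by positivity)
    rw [Real.log_inv] at h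
    have : 1 / x = x⁻¹ := one_div x
    linarith
  have hlx : Real.log x = Real.log (a + γ) + Real.log b - (Real.log (b + γ) + Real.log a) := by
    rw [hx, Real.log_div (by positivity) (by positivity),
        Real.log_mul (by positivity) (by positivity),
        Real.log_mul (by positivity) (by positivity)]
  have h1x : 1 - 1 / x = γ * (b - a) / ((a + γ) * b) := by
    rw [hx]
    field_simp
    ring
  have hkey : γ * (b - a) / ((a + γ) * b) ≥ -(γ * (a - b) / ((b + γ) * b)) := by
    have hneg : -(γ * (a - b) / ((b + γ) * b)) = γ * (b - a) / ((b + γ) * b) := by ring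
    rw [ge_iff_le, hneg, div_le_div_iff₀ (by positivity) (by positivity)]
    nlinarith [sq_nonneg (a - b), mul_pos hγ hb, sq_nonneg (a - b) , mul_nonneg (mul_nonneg hγ.le hb.le) (sq_nonneg (a - b))]
  have := hlogx
  rw [hlx, h1x] at this
  linarith

theorem stmt_2 (H γs xl yl δ ξ : ℝ) (hH : H > 0) (hγ : γs > 0) :
    Real.log (1 + γs / (H ^ 2 + (xl + δ) ^ 2 + (yl + ξ) ^ 2)) ≥
      Real.log (1 + γs / (H ^ 2 + xl ^ 2 + yl ^ 2)) -
        γs * (δ ^ 2 + ξ ^ 2 + 2 * xl * δ + 2 * yl * ξ) /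
          (((H ^ 2 + xl ^ 2 + yl ^ 2) + γs) * (H ^ 2 + xl ^ 2 + yl ^ 2)) := by
  have ha : 0 < H ^ 2 + (xl + δ) ^ 2 + (yl + ξ) ^ 2 := by positivity
  have hb : 0 < H ^ 2 + xl ^ 2 + yl ^ 2 := by positivity
  have h := aux_log_bound (H ^ 2 + (xl + δ) ^ 2 + (yl + ξ) ^ 2)
    (H ^ 2 + xl ^ 2 + yl ^ 2) γs ha hb hγ
  have hdiff : (H ^ 2 + (xl + δ) ^ 2 + (yl + ξ) ^ 2) - (H ^ 2 + xl ^ 2 + yl ^ 2)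
      = δ ^ 2 + ξ ^ 2 + 2 * xl * δ + 2 * yl * ξ := by ring
  rw [hdiff] at h
  exact h
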